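/- Let T be a tree with n vertices and maximum degree 3, and let z be a positive integer with n ≥ 3z − 2. Then there exists a set of edges E' ⊆ E(T) such that every connected component of T \ E' contains at least z and at most 3z − 2 vertices. -/
import Mathlib

set_option linter.unusedSectionVars false

open SimpleGraph
open scoped Classical

namespace Fred

variable {V : Type*} [Fintype V] {T : SimpleGraph V}

/-- Connectivity of a finset within graph `T` (walks staying inside the set). -/
def FConn (T : SimpleGraph V) (s : Finset V) : Prop :=
  ∀ ⦃x⦄, x ∈ s → ∀ ⦃y⦄, y ∈ s → ∃ p : T.Walk x y, ∀ v ∈ p.support, v ∈ s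

/-- The connected component of `u` inside the finset `s`. -/
noncomputable def fcomp (T : SimpleGraph V) (s : Finset V) (u : V) : Finset V :=
  s.filter fun x => ∃ p : T.Walk u x, ∀ v ∈ p.support, v ∈ s

lemma fcomp_subset {s : Finset V} {u : V} : fcomp T s u ⊆ s := Finset.filter_subset _ _

lemma mem_fcomp {s : Finset V} {u x : V} :
    x ∈ fcomp T s u ↔ x ∈ s ∧ ∃ p : T.Walk u x, ∀ v ∈ p.support, v ∈ s :=
  Finset.mem_filter

lemma mem_fcomp_self {s : Finset V} {u : V} (hu : u ∈ s) : u ∈ fcomp T s u :=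
  mem_fcomp.2 ⟨hu, Walk.nil, by simp [hu]⟩

lemma fcomp_support {s : Finset V} {u x : V} (p : T.Walk u x)
    (hp : ∀ v ∈ p.support, v ∈ s) : ∀ v ∈ p.support, v ∈ fcomp T s u := by
  intro v hv
  exact mem_fcomp.2 ⟨hp v hv, p.takeUntil v hv,
    fun w hw => hp w (Walk.support_takeUntil_subset _ _ hw)⟩

lemma fconn_fcomp {s : Finset V} {u : V} : FConn T (fcomp T s u) := by
  intro x hx y hy
  obtain ⟨_, p, hp⟩ := mem_fcomp.1 hx
  obtain ⟨_, q, hq⟩ := mem_fcomp.1 hy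
  refine ⟨p.reverse.append q, fun v hv => ?_⟩
  rcases (Walk.mem_support_append_iff _ _).1 hv with h | h
  · exact fcomp_support p hp v (by simpa using h)
  · exact fcomp_support q hq v h

lemma fcomp_closed {s : Finset V} {u x y : V} (hx : x ∈ fcomp T s u) (hy : y ∈ s)
    (hadj : T.Adj x y) : y ∈ fcomp T s u := by
  obtain ⟨hxs, p, hp⟩ := mem_fcomp.1 hx
  refine mem_fcomp.2 ⟨hy, p.append (Walk.cons hadj Walk.nil), fun v hv => ?_⟩
  rcases (Walk.mem_support_append_iff _ _).1 hv with h | h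
  · exact hp v h
  · simp only [Walk.support_cons, Walk.support_nil, List.mem_cons] at h
    rcases h with rfl | h
    · exact hp v p.end_mem_support
    · rcases h with rfl | h
      · exact hy
      · simp at h

lemma fcomp_eq_of_mem {s : Finset V} {u y : V} (hy : y ∈ fcomp T s u) :
    fcomp T s y = fcomp T s u := by
  obtain ⟨hys, q, hq⟩ := mem_fcomp.1 hy
  ext x
  simp only [mem_fcomp]
  constructor
  · rintro ⟨hxs, p, hp⟩
    refine ⟨hxs, q.append p, fun v hv => ?_⟩
    rcases (Walk.mem_support_append_iff _ _).1 hv with h | h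
    exacts [hq v h, hp v h]
  · rintro ⟨hxs, p, hp⟩
    refine ⟨hxs, q.reverse.append p, fun v hv => ?_⟩
    rcases (Walk.mem_support_append_iff _ _).1 hv with h | h
    · exact hq v (by simpa using h)
    · exact hp v h
/-- Every vertex of `A \ {r}` lies in the inside-component of some neighbour of `r`. -/
lemma coverage {A : Finset V} {r : V} :
    ∀ {x : V} (p : T.Walk x r), (∀ v ∈ p.support, v ∈ A) → x ≠ r →
      ∃ u, T.Adj r u ∧ u ∈ A ∧ x ∈ fcomp T (A.erase r) u := by
  intro x p
  induction p with
  | nil => intro _ hxr; exact absurd rfl hxr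
  | @cons a b rr h p ih =>
    intro hsup hxr
    have ha : a ∈ A := hsup a (by simp)
    have hb : b ∈ A := hsup b (by simp)
    by_cases hbr : b = rr
    · subst hbr
      exact ⟨a, h.symm, ha, mem_fcomp_self (Finset.mem_erase.2 ⟨hxr, ha⟩)⟩
    · obtain ⟨u, hu1, hu2, hu3⟩ := ih (fun v hv => hsup v (by simp [hv])) hbr
      exact ⟨u, hu1, hu2, fcomp_closed hu3 (Finset.mem_erase.2 ⟨hxr, ha⟩) h.symm⟩

/-- A walk from outside `A` into `A` (inside `S`) crosses an edge into `A`. -/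
lemma exit_edge {S A : Finset V} :
    ∀ {y a : V} (p : T.Walk y a), (∀ v ∈ p.support, v ∈ S) → y ∉ A → a ∈ A →
      ∃ x' y', x' ∈ A ∧ y' ∈ S ∧ y' ∉ A ∧ T.Adj x' y' := by
  intro y a p
  induction p with
  | nil => intro _ hy ha; exact absurd ha hy
  | @cons u b c h p ih =>
    intro hsup hy ha
    by_cases hb : b ∈ A
    · exact ⟨b, u, hb, hsup u (by simp), hy, h.symm⟩
    · exact ih (fun v hv => hsup v (by simp [hv])) hb ha

/-- In a tree, a vertex `r` outside a connected set `s` has at most one neighbour in `s`. -/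
lemma tree_unique_nbr (hT : T.IsTree) {s : Finset V} (hs : FConn T s) {r c c' : V}
    (hr : r ∉ s) (hc : c ∈ s) (hc' : c' ∈ s) (h1 : T.Adj r c) (h2 : T.Adj r c') :
    c = c' := by
  by_contra hne
  obtain ⟨p, hp⟩ := hs hc hc'
  set q := p.toPath with hq
  have hqs : ∀ v ∈ q.val.support, v ∈ s := fun v hv => hp v (p.support_toPath_subset hv)
  have hrq : r ∉ q.val.support := fun hrv => hr (hqs r hrv)
  have hpath1 : (Walk.cons h1 q.val).IsPath := q.prop.cons hrq
  have hpath2 : ((Path.singleton h2 : T.Path r c') : T.Walk r c').IsPath :=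
    (Path.singleton h2).prop
  have := ((hT.existsUnique_path r c').unique hpath1 hpath2)
  have hlen : (Walk.cons h1 q.val).length = (Path.singleton h2 : T.Path r c').val.length := by
    rw [this]
  simp only [Walk.length_cons, Path.singleton] at hlen
  have : q.val.length = 0 := by
    have : q.val.length + 1 = 1 := by simpa using hlen
    omega
  exact hne (Walk.eq_of_length_eq_zero this)

lemma reachable_induce {s : Finset V} :
    ∀ {x y : V} (p : T.Walk x y), (∀ v ∈ p.support, v ∈ s) →
      ∀ (hx : x ∈ (s : Set V)) (hy : y ∈ (s : Set V)),
      (T.induce (s : Set V)).Reachable ⟨x, hx⟩ ⟨y, hy⟩ := by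
  intro x y p
  induction p with
  | nil => intro _ hx hy; rfl
  | @cons a b c h p ih =>
    intro hsup hx hy
    have hb : b ∈ s := hsup b (by simp)
    have step : (T.induce (s : Set V)).Adj ⟨a, hx⟩ ⟨b, hb⟩ := h
    exact step.reachable.trans (ih (fun v hv => hsup v (by simp [hv])) hb hy)

/-- A nonempty connected subset of a tree contains a vertex with at most one
neighbour inside the subset. -/
lemma exists_leaf (hT : T.IsTree) {s : Finset V} (hs : FConn T s) (hne : s.Nonempty) :
    ∃ r ∈ s, (T.neighborFinset r ∩ s).card ≤ 1 := by
  set G := T.induce (s : Set V) with hG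
  haveI : Nonempty (s : Set V) := ⟨⟨hne.choose, hne.choose_spec⟩⟩
  have hconn : G.Connected := by
    refine ⟨fun a b => ?_⟩
    obtain ⟨p, hp⟩ := hs a.2 b.2
    have := reachable_induce p hp a.2 b.2
    simpa using this
  have hac : G.IsAcyclic := by
    intro v c hc
    have : (c.map (Embedding.induce (G := T) (s : Set V)).toHom).IsCycle :=
      hc.map (Embedding.induce (G := T) (s : Set V)).injective
    exact hT.IsAcyclic _ this
  have hGT : G.IsTree := ⟨hconn, hac⟩
  have hcard : G.edgeFinset.card + 1 = Fintype.card (s : Set V) := hGT.card_edgeFinset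
  -- find a vertex of degree ≤ 1
  have : ∃ a : (s : Set V), G.degree a ≤ 1 := by
    by_contra hno
    push_neg at hno
    have h2 : ∀ a : (s : Set V), 2 ≤ G.degree a := fun a => hno a
    have hsum := G.sum_degrees_eq_twice_card_edges
    have hge : 2 * Fintype.card (s : Set V) ≤ ∑ v, G.degree v := by
      calc 2 * Fintype.card (s : Set V) = ∑ _v : (s : Set V), 2 := by
            simp [mul_comm]
        _ ≤ ∑ v, G.degree v := Finset.sum_le_sum (fun i _ => h2 i)
    rw [hsum] at hge
    have hpos : 0 < Fintype.card (s : Set V) := Fintype.card_pos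
    omega
  obtain ⟨⟨r, hr⟩, hdeg⟩ := this
  refine ⟨r, hr, ?_⟩
  have : (T.neighborFinset r ∩ s).card ≤ G.degree ⟨r, hr⟩ := by
    rw [← card_neighborFinset_eq_degree]
    apply Finset.card_le_card_of_injOn (fun y => if h : y ∈ s then (⟨y, h⟩ : (s : Set V)) else ⟨r, hr⟩)
    · intro y hy
      have hy1 : T.Adj r y := by
        have := Finset.mem_inter.1 hy
        simpa [mem_neighborFinset] using this.1
      have hy2 : y ∈ s := (Finset.mem_inter.1 hy).2
      simp only [hy2, dif_pos, Finset.mem_coe, mem_neighborFinset]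
      exact hy1
    · intro a ha b hb hab
      have ha2 : a ∈ s := (Finset.mem_inter.1 ha).2
      have hb2 : b ∈ s := (Finset.mem_inter.1 hb).2
      simpa [ha2, hb2] using congrArg Subtype.val hab
  omega

lemma support_append_edge {a b c : V} {p : T.Walk a b} (h : T.Adj b c) :
    ∀ v ∈ (p.append (Walk.cons h Walk.nil)).support, v ∈ p.support ∨ v = c := by
  intro v hv
  rcases (Walk.mem_support_append_iff _ _).1 hv with h' | h'
  · exact Or.inl h'
  · simp only [Walk.support_cons, Walk.support_nil, List.mem_cons] at h'
    rcases h' with rfl | h'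
    · exact Or.inl p.end_mem_support
    · rcases h' with rfl | h'
      · exact Or.inr rfl
      · simp at h'

/-- The invariant for the pendant-subtree minimization. -/
structure Good (T : SimpleGraph V) (z : ℕ) (S A : Finset V) : Prop where
  sub : A ⊆ S
  conn : FConn T A
  big : z ≤ A.card
  rest : A = S ∨ ∃ r ∈ A, (∀ x ∈ A, ∀ y ∈ S, y ∉ A → T.Adj x y → x = r) ∧
      (∃ y ∈ S, y ∉ A ∧ T.Adj r y) ∧ FConn T (S \ A)

lemma step (hT : T.IsTree) (hdeg : ∀ v, T.degree v ≤ 3) {z : ℕ} (hz : 0 < z)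
    {S A : Finset V} (hA : Good T z S A) (h2 : 2 * z ≤ A.card) :
    ∃ C, Good T z S C ∧ C.card < A.card := by
  -- find the attachment vertex r with few neighbours inside A
  have hAne : A.Nonempty := Finset.card_pos.1 (by omega)
  obtain ⟨r, hrA, hN, hrest2⟩ :
      ∃ r ∈ A, (T.neighborFinset r ∩ A).card ≤ 2 ∧
        (A = S ∨ ((∀ x ∈ A, ∀ y ∈ S, y ∉ A → T.Adj x y → x = r) ∧
          (∃ y ∈ S, y ∉ A ∧ T.Adj r y) ∧ FConn T (S \ A))) := by
    rcases hA.rest with hAS | ⟨r, hrA, hcross, hy₀, hconnSA⟩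
    · obtain ⟨r, hrA, hle⟩ := exists_leaf hT hA.conn hAne
      exact ⟨r, hrA, by omega, Or.inl hAS⟩
    · refine ⟨r, hrA, ?_, Or.inr ⟨hcross, hy₀, hconnSA⟩⟩
      obtain ⟨y₀, hy₀S, hy₀A, hry₀⟩ := hy₀
      have hsub : T.neighborFinset r ∩ A ⊆ (T.neighborFinset r).erase y₀ := by
        intro w hw
        rcases Finset.mem_inter.1 hw with ⟨hw1, hw2⟩
        exact Finset.mem_erase.2 ⟨fun h => hy₀A (h ▸ hw2), hw1⟩
      have h1 := Finset.card_le_card hsub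
      have h2' : y₀ ∈ T.neighborFinset r := (mem_neighborFinset _ _ _).2 hry₀
      have h3 := Finset.card_erase_of_mem h2'
      have h4 : (T.neighborFinset r).card ≤ 3 := by
        rw [card_neighborFinset_eq_degree]; exact hdeg r
      omega
  set B := A.erase r with hB
  set N := T.neighborFinset r ∩ A with hNdef
  have hBcard : B.card = A.card - 1 := Finset.card_erase_of_mem hrA
  have hcover : ∀ x ∈ B, ∃ u ∈ N, x ∈ fcomp T B u := by
    intro x hx
    rcases Finset.mem_erase.1 hx with ⟨hxr, hxA⟩
    obtain ⟨p, hp⟩ := hA.conn hxA hrA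
    obtain ⟨u, hu1, hu2, hu3⟩ := coverage p hp hxr
    exact ⟨u, Finset.mem_inter.2 ⟨(mem_neighborFinset _ _ _).2 hu1, hu2⟩, hu3⟩
  -- some component has size ≥ z
  obtain ⟨u, huN, hzC⟩ : ∃ u ∈ N, z ≤ (fcomp T B u).card := by
    by_contra hno
    push_neg at hno
    have hsub : B ⊆ N.biUnion (fun u => fcomp T B u) := by
      intro x hx
      obtain ⟨u, hu, hx'⟩ := hcover x hx
      exact Finset.mem_biUnion.2 ⟨u, hu, hx'⟩
    have h1 : B.card ≤ ∑ u ∈ N, (fcomp T B u).card :=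
      le_trans (Finset.card_le_card hsub) (Finset.card_biUnion_le)
    have h2' : ∑ u ∈ N, (fcomp T B u).card ≤ N.card * (z - 1) := by
      apply Finset.sum_le_card_nsmul
      intro x hx
      have := hno x hx
      omega
    have : N.card * (z - 1) ≤ 2 * (z - 1) := Nat.mul_le_mul_right _ hN
    omega
  rcases Finset.mem_inter.1 huN with ⟨hru', huA⟩
  have hru : T.Adj r u := (mem_neighborFinset _ _ _).1 hru'
  have huB : u ∈ B := Finset.mem_erase.2 ⟨hru.ne', huA⟩
  set C := fcomp T B u with hC
  have huC : u ∈ C := mem_fcomp_self huB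
  have hCB : C ⊆ B := fcomp_subset
  have hCA : C ⊆ A := hCB.trans (Finset.erase_subset _ _)
  have hCS : C ⊆ S := hCA.trans hA.sub
  have hrC : r ∉ C := fun h => (Finset.mem_erase.1 (hCB h)).1 rfl
  have hrS : r ∈ S := hA.sub hrA
  -- crossing edges of C all touch u
  have hcrossC : ∀ x ∈ C, ∀ y ∈ S, y ∉ C → T.Adj x y → x = u := by
    intro x hx y hyS hyC hadj
    by_cases hyA : y ∈ A
    · by_cases hyr : y = r
      · subst hyr
        exact tree_unique_nbr hT fconn_fcomp hrC hx huC hadj.symm hru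
      · exact absurd (fcomp_closed hx (Finset.mem_erase.2 ⟨hyr, hyA⟩) hadj) hyC
    · rcases hrest2 with hAS | ⟨hcross, _, _⟩
      · exact absurd (hAS ▸ hyS) hyA
      · have hxr : x = r := hcross x (hCA hx) y hyS hyA hadj
        exact absurd (hxr ▸ hx) hrC
  -- every vertex outside C reaches r avoiding C
  have reach : ∀ x, x ∈ S → x ∉ C → ∃ p : T.Walk x r, ∀ v ∈ p.support, v ∈ S ∧ v ∉ C := by
    intro x hxS hxC
    by_cases hxr : x = r
    · subst hxr
      exact ⟨Walk.nil, by simp [hrS, hrC]⟩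
    · by_cases hxA : x ∈ A
      · have hxB : x ∈ B := Finset.mem_erase.2 ⟨hxr, hxA⟩
        obtain ⟨u', hu'N, hx'⟩ := hcover x hxB
        rcases Finset.mem_inter.1 hu'N with ⟨hru'', hu'A⟩
        have hru2 : T.Adj r u' := (mem_neighborFinset _ _ _).1 hru''
        have hu'B : u' ∈ B := Finset.mem_erase.2 ⟨hru2.ne', hu'A⟩
        have hdisj : ∀ v ∈ fcomp T B u', v ∉ C := by
          intro v hv hvC
          have e1 := fcomp_eq_of_mem hv
          have e2 := fcomp_eq_of_mem (hC ▸ hvC)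
          have : x ∈ C := by rw [hC, ← e2, e1]; exact hx'
          exact hxC this
        obtain ⟨p, hp⟩ := fconn_fcomp (u := u') hx' (mem_fcomp_self hu'B)
        refine ⟨p.append (Walk.cons hru2.symm Walk.nil), fun v hv => ?_⟩
        rcases support_append_edge _ v hv with h' | rfl
        · have hvf := hp v h'
          exact ⟨hA.sub (Finset.erase_subset _ _ (fcomp_subset hvf)), hdisj v hvf⟩
        · exact ⟨hrS, hrC⟩
      · rcases hrest2 with hAS | ⟨_, ⟨y₀, hy₀S, hy₀A, hry₀⟩, hconnSA⟩
        · exact absurd (hAS ▸ hxS) hxA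
        · have hxSA : x ∈ S \ A := Finset.mem_sdiff.2 ⟨hxS, hxA⟩
          have hy₀SA : y₀ ∈ S \ A := Finset.mem_sdiff.2 ⟨hy₀S, hy₀A⟩
          obtain ⟨p, hp⟩ := hconnSA hxSA hy₀SA
          refine ⟨p.append (Walk.cons hry₀.symm Walk.nil), fun v hv => ?_⟩
          rcases support_append_edge _ v hv with h' | rfl
          · rcases Finset.mem_sdiff.1 (hp v h') with ⟨hvS, hvA⟩
            exact ⟨hvS, fun hvC => hvA (hCA hvC)⟩
          · exact ⟨hrS, hrC⟩
  have hconnSC : FConn T (S \ C) := by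
    intro x hx y hy
    rcases Finset.mem_sdiff.1 hx with ⟨hxS, hxC⟩
    rcases Finset.mem_sdiff.1 hy with ⟨hyS, hyC⟩
    obtain ⟨p, hp⟩ := reach x hxS hxC
    obtain ⟨q, hq⟩ := reach y hyS hyC
    refine ⟨p.append q.reverse, fun v hv => ?_⟩
    rcases (Walk.mem_support_append_iff _ _).1 hv with h' | h'
    · exact Finset.mem_sdiff.2 (hp v h')
    · exact Finset.mem_sdiff.2 (hq v (by simpa using h'))
  refine ⟨C, ⟨hCS, fconn_fcomp, hzC, Or.inr ⟨u, huC, hcrossC,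
    ⟨r, hrS, hrC, hru.symm⟩, hconnSC⟩⟩, ?_⟩
  have := Finset.card_le_card hCB
  omega

lemma partition (hT : T.IsTree) (hdeg : ∀ v, T.degree v ≤ 3) {z : ℕ} (hz : 0 < z) :
    ∀ n (S : Finset V), S.card ≤ n → FConn T S → z ≤ S.card →
      ∃ P : Finset (Finset V),
        (∀ p ∈ P, p ⊆ S ∧ FConn T p ∧ z ≤ p.card ∧ p.card ≤ 3 * z - 2) ∧
        (∀ p ∈ P, ∀ q ∈ P, p ≠ q → Disjoint p q) ∧
        P.biUnion id = S := by
  intro n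
  induction n with
  | zero => intro S hn _ hzS; omega
  | succ n ih =>
    intro S hn hS hzS
    by_cases hsmall : S.card ≤ 3 * z - 2
    · refine ⟨{S}, ?_, ?_, by simp⟩
      · intro p hp
        rw [Finset.mem_singleton] at hp
        subst hp
        exact ⟨subset_rfl, hS, hzS, hsmall⟩
      · intro p hp q hq hpq
        rw [Finset.mem_singleton] at hp hq
        exact absurd (hp.trans hq.symm) hpq
    · push_neg at hsmall
      have hGood : Good T z S S := ⟨subset_rfl, hS, hzS, Or.inl rfl⟩
      obtain ⟨A, hAmem, hAmin⟩ :=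
        Finset.exists_min_image ((Finset.univ : Finset (Finset V)).filter (Good T z S ·))
          Finset.card ⟨S, by simp [hGood]⟩
      rw [Finset.mem_filter] at hAmem
      have hA : Good T z S A := hAmem.2
      have hAcard : A.card < 2 * z := by
        by_contra hbig
        push_neg at hbig
        obtain ⟨C, hC, hCcard⟩ := step hT hdeg hz hA hbig
        have := hAmin C (Finset.mem_filter.2 ⟨Finset.mem_univ _, hC⟩)
        omega
      have hAS : A ≠ S := by
        intro h
        rw [h] at hAcard
        omega
      rcases hA.rest with h | ⟨r, hrA, hcross, hy₀, hconnSA⟩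
      · exact absurd h hAS
      · have hSA : (S \ A).card = S.card - A.card := Finset.card_sdiff_of_subset hA.sub
        have hzSA : z ≤ (S \ A).card := by omega
        have hSA_le : (S \ A).card ≤ n := by
          have : 1 ≤ A.card := by have := hA.big; omega
          omega
        obtain ⟨P', hP'1, hP'2, hP'3⟩ := ih (S \ A) hSA_le hconnSA hzSA
        refine ⟨insert A P', ?_, ?_, ?_⟩
        · intro p hp
          rcases Finset.mem_insert.1 hp with rfl | hp
          · exact ⟨hA.sub, hA.conn, hA.big, by have := hA.big; omega⟩
          · obtain ⟨h1, h2, h3, h4⟩ := hP'1 p hp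
            exact ⟨h1.trans (Finset.sdiff_subset), h2, h3, h4⟩
        · intro p hp q hq hpq
          rcases Finset.mem_insert.1 hp with hpA | hp
          · rcases Finset.mem_insert.1 hq with hqA | hq
            · exact absurd (hpA.trans hqA.symm) hpq
            · have hq' : q ⊆ S \ A := (hP'1 q hq).1
              exact hpA ▸ Finset.disjoint_left.2 fun a hap haq =>
                (Finset.mem_sdiff.1 (hq' haq)).2 hap
          · rcases Finset.mem_insert.1 hq with hqA | hq
            · have hp' : p ⊆ S \ A := (hP'1 p hp).1
              exact hqA ▸ Finset.disjoint_left.2 fun a hap haq =>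
                (Finset.mem_sdiff.1 (hp' hap)).2 haq
            · exact hP'2 p hp q hq hpq
        · rw [Finset.biUnion_insert, hP'3]
          simp only [id]
          rw [Finset.union_sdiff_of_subset hA.sub]

end Fred

open Fred in
/-- Frederickson's clustering lemma: a tree on `n` vertices with maximum degree `3`
and `n ≥ 3z - 2` can be split, by removing a set of edges `E'`, into components each
containing at least `z` and at most `3z - 2` vertices. -/
theorem stmt2 {V : Type*} [Fintype V] (T : SimpleGraph V) (hT : T.IsTree)
    (hdeg : ∀ v : V, T.degree v ≤ 3) (z : ℕ) (hz : 0 < z)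
    (hn : 3 * z - 2 ≤ Fintype.card V) :
    ∃ E' ⊆ T.edgeSet, ∀ c : (T.deleteEdges E').ConnectedComponent,
      z ≤ c.supp.ncard ∧ c.supp.ncard ≤ 3 * z - 2 := by
  classical
  have hconnU : FConn T (Finset.univ : Finset V) := by
    intro x _ y _
    obtain ⟨p⟩ := hT.isConnected.preconnected x y
    exact ⟨p, by simp⟩
  have hzU : z ≤ (Finset.univ : Finset V).card := by
    rw [Finset.card_univ]; omega
  obtain ⟨P, hP1, hP2, hP3⟩ := partition hT hdeg hz (Finset.univ : Finset V).card
    Finset.univ le_rfl hconnU hzU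
  have hcover : ∀ v : V, ∃ p ∈ P, v ∈ p := by
    intro v
    have : v ∈ P.biUnion id := hP3 ▸ Finset.mem_univ v
    simpa using Finset.mem_biUnion.1 this
  choose f hfP hfmem using hcover
  have funiq : ∀ v p, p ∈ P → v ∈ p → p = f v := by
    intro v p hp hv
    by_contra hne
    exact (Finset.disjoint_left.1 (hP2 p hp (f v) (hfP v) hne) hv) (hfmem v)
  refine ⟨{e | e ∈ T.edgeSet ∧ ∀ x y, e = s(x, y) → f x ≠ f y}, fun e he => he.1, ?_⟩
  set E' : Set (Sym2 V) := {e | e ∈ T.edgeSet ∧ ∀ x y, e = s(x, y) → f x ≠ f y} with hE'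
  have hadj : ∀ a b, (T.deleteEdges E').Adj a b ↔ T.Adj a b ∧ f a = f b := by
    intro a b
    rw [deleteEdges_adj]
    constructor
    · rintro ⟨h1, h2⟩
      refine ⟨h1, ?_⟩
      by_contra hne
      refine h2 ⟨(T.mem_edgeSet).2 h1, fun x y hxy => ?_⟩
      rcases Sym2.eq_iff.1 hxy with ⟨rfl, rfl⟩ | ⟨rfl, rfl⟩
      · exact hne
      · exact fun h => hne h.symm
    · rintro ⟨h1, h2⟩
      refine ⟨h1, fun hmem => ?_⟩
      exact hmem.2 a b rfl h2
  have walk_f : ∀ {a b : V} (p : (T.deleteEdges E').Walk a b), f a = f b := by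
    intro a b p
    induction p with
    | nil => rfl
    | cons h p ih => exact ((hadj _ _).1 h).2.trans ih
  have lift : ∀ {a b : V} (p : T.Walk a b) (q : Finset V), q ∈ P →
      (∀ v ∈ p.support, v ∈ q) → (T.deleteEdges E').Reachable a b := by
    intro a b p q hq
    induction p with
    | nil => intro _; rfl
    | @cons a c b h p ih =>
      intro hsup
      have ha : a ∈ q := hsup a (by simp)
      have hc : c ∈ q := hsup c (by simp)
      have hfac : f a = f c := (funiq a q hq ha).symm.trans (funiq c q hq hc)
      exact (Adj.reachable ((hadj a c).2 ⟨h, hfac⟩)).trans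
        (ih (fun v hv => hsup v (by simp [hv])))
  intro c
  induction c using ConnectedComponent.ind with
  | _ v =>
    have hsupp : (SimpleGraph.connectedComponentMk (T.deleteEdges E') v).supp = ↑(f v) := by
      ext u
      simp only [ConnectedComponent.mem_supp_iff, Finset.mem_coe]
      constructor
      · intro h
        obtain ⟨p⟩ := (ConnectedComponent.eq.1 h)
        exact (walk_f p) ▸ hfmem u
      · intro hu
        obtain ⟨p, hp⟩ := (hP1 (f v) (hfP v)).2.1 (hfmem v) hu
        exact ConnectedComponent.sound (lift p (f v) (hfP v) hp).symm
    rw [hsupp, Set.ncard_coe_finset]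
    exact ⟨(hP1 _ (hfP v)).2.2.1, (hP1 _ (hfP v)).2.2.2⟩
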